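/- arXiv:2309.00712 — 2 statements merged into one kernel-verified Lean document; each statement's English description precedes it below -/
import Mathlib

section
/- Let g : ℝ → ℝ be smooth, 2π-periodic and strictly positive, let α < T, and let κ : ℝ × [α, T) → ℝ be smooth, strictly positive, 2π-periodic in its first variable θ, and satisfy ∂_τ κ = κ²(∂²_θ(gκ) + gκ). Then for all θ and all τ ∈ (α, T): κ(θ,τ)·(∂²_θ(gκ)(θ,τ) + g(θ)κ(θ,τ)) + 1/(2(τ − α)) ≥ 0. -/
noncomputable section

open Real Set Filter Topology

/-- Partial derivative in the first variable (the tangent angle `θ`), at fixed time. -/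
def pd1 (f : ℝ × ℝ → ℝ) (p : ℝ × ℝ) : ℝ :=
  deriv (fun θ => f (θ, p.2)) p.1

/-- Partial derivative in the second (time) variable `τ`, at fixed tangent angle `θ`. -/
def pd2 (f : ℝ × ℝ → ℝ) (p : ℝ × ℝ) : ℝ :=
  deriv (fun τ => f (p.1, τ)) p.2

namespace ACSFAux

lemma hasDerivAt_slice1 {h : ℝ × ℝ → ℝ} {p : ℝ × ℝ} (hd : DifferentiableAt ℝ h p) :
    HasDerivAt (fun θ => h (θ, p.2)) (fderiv ℝ h p (1, 0)) p.1 := by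
  have hl : HasDerivAt (fun θ : ℝ => ((θ, p.2) : ℝ × ℝ)) ((1 : ℝ), (0 : ℝ)) p.1 :=
    (hasDerivAt_id p.1).prodMk (hasDerivAt_const p.1 p.2)
  exact hd.hasFDerivAt.comp_hasDerivAt p.1 hl

lemma hasDerivAt_slice2 {h : ℝ × ℝ → ℝ} {p : ℝ × ℝ} (hd : DifferentiableAt ℝ h p) :
    HasDerivAt (fun τ => h (p.1, τ)) (fderiv ℝ h p (0, 1)) p.2 := by
  have hl : HasDerivAt (fun τ : ℝ => ((p.1, τ) : ℝ × ℝ)) ((0 : ℝ), (1 : ℝ)) p.2 :=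
    (hasDerivAt_const p.2 p.1).prodMk (hasDerivAt_id p.2)
  exact hd.hasFDerivAt.comp_hasDerivAt p.2 hl

lemma pd1_eq_fderiv {h : ℝ × ℝ → ℝ} {p : ℝ × ℝ} (hd : DifferentiableAt ℝ h p) :
    pd1 h p = fderiv ℝ h p (1, 0) := (hasDerivAt_slice1 hd).deriv

lemma pd2_eq_fderiv {h : ℝ × ℝ → ℝ} {p : ℝ × ℝ} (hd : DifferentiableAt ℝ h p) :
    pd2 h p = fderiv ℝ h p (0, 1) := (hasDerivAt_slice2 hd).deriv

lemma pd1_hasDerivAt {h : ℝ × ℝ → ℝ} {p : ℝ × ℝ} (hd : DifferentiableAt ℝ h p) :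
    HasDerivAt (fun θ => h (θ, p.2)) (pd1 h p) p.1 := by
  rw [pd1_eq_fderiv hd]; exact hasDerivAt_slice1 hd

lemma pd2_hasDerivAt {h : ℝ × ℝ → ℝ} {p : ℝ × ℝ} (hd : DifferentiableAt ℝ h p) :
    HasDerivAt (fun τ => h (p.1, τ)) (pd2 h p) p.2 := by
  rw [pd2_eq_fderiv hd]; exact hasDerivAt_slice2 hd

lemma pd1_congr_nhds {h₁ h₂ : ℝ × ℝ → ℝ} {p : ℝ × ℝ} (h : h₁ =ᶠ[nhds p] h₂) :
    pd1 h₁ p = pd1 h₂ p := by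
  have hc : Continuous (fun θ : ℝ => ((θ, p.2) : ℝ × ℝ)) := continuous_id.prodMk continuous_const
  have ht : Tendsto (fun θ : ℝ => ((θ, p.2) : ℝ × ℝ)) (nhds p.1) (nhds p) := hc.tendsto p.1
  exact (h.comp_tendsto ht).deriv_eq

lemma pd2_congr_nhds {h₁ h₂ : ℝ × ℝ → ℝ} {p : ℝ × ℝ} (h : h₁ =ᶠ[nhds p] h₂) :
    pd2 h₁ p = pd2 h₂ p := by
  have hc : Continuous (fun τ : ℝ => ((p.1, τ) : ℝ × ℝ)) := continuous_const.prodMk continuous_id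
  have ht : Tendsto (fun τ : ℝ => ((p.1, τ) : ℝ × ℝ)) (nhds p.2) (nhds p) := hc.tendsto p.2
  exact (h.comp_tendsto ht).deriv_eq

lemma pd1_congr_open {h₁ h₂ : ℝ × ℝ → ℝ} {U : Set (ℝ × ℝ)} (hU : IsOpen U) {p : ℝ × ℝ}
    (hp : p ∈ U) (h : ∀ q ∈ U, h₁ q = h₂ q) : pd1 h₁ p = pd1 h₂ p :=
  pd1_congr_nhds (eventually_of_mem (hU.mem_nhds hp) h)

lemma pd1_contDiffOn {h : ℝ × ℝ → ℝ} {U : Set (ℝ × ℝ)} (hU : IsOpen U)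
    (hh : ContDiffOn ℝ (⊤ : ℕ∞) h U) : ContDiffOn ℝ (⊤ : ℕ∞) (pd1 h) U := by
  have hf : ContDiffOn ℝ (⊤ : ℕ∞) (fderiv ℝ h) U := hh.fderiv_of_isOpen hU (by simp)
  have h2 : ContDiffOn ℝ (⊤ : ℕ∞) (fun q => fderiv ℝ h q ((1 : ℝ), (0 : ℝ))) U :=
    hf.clm_apply contDiffOn_const
  exact h2.congr fun q hq => pd1_eq_fderiv
    ((hh.contDiffAt (hU.mem_nhds hq)).differentiableAt (by simp))

lemma diffAt {F : Type*} [NormedAddCommGroup F] [NormedSpace ℝ F]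
    {h : ℝ × ℝ → F} {U : Set (ℝ × ℝ)} (hU : IsOpen U)
    (hh : ContDiffOn ℝ (⊤ : ℕ∞) h U) {p : ℝ × ℝ} (hp : p ∈ U) : DifferentiableAt ℝ h p :=
  (hh.contDiffAt (hU.mem_nhds hp)).differentiableAt (by simp)

/-- Clairaut / Schwarz: mixed partials commute for smooth functions on an open set. -/
lemma pd_comm {h : ℝ × ℝ → ℝ} {U : Set (ℝ × ℝ)} (hU : IsOpen U)
    (hh : ContDiffOn ℝ (⊤ : ℕ∞) h U) {p : ℝ × ℝ} (hp : p ∈ U) :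
    pd2 (pd1 h) p = pd1 (pd2 h) p := by
  have hdiff : ∀ q ∈ U, DifferentiableAt ℝ h q := fun q hq => diffAt hU hh hq
  have hf' : ContDiffOn ℝ (⊤ : ℕ∞) (fderiv ℝ h) U := hh.fderiv_of_isOpen hU (by simp)
  have hd' : DifferentiableAt ℝ (fderiv ℝ h) p := diffAt hU hf' hp
  have hsymm := second_derivative_symmetric_of_eventually (f := h) (f' := fderiv ℝ h)
    (f'' := fderiv ℝ (fderiv ℝ h) p)
    (eventually_of_mem (hU.mem_nhds hp) fun q hq => (hdiff q hq).hasFDerivAt) hd'.hasFDerivAt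
  have e1 : pd1 h =ᶠ[nhds p] fun q => fderiv ℝ h q (1, 0) :=
    eventually_of_mem (hU.mem_nhds hp) fun q hq => pd1_eq_fderiv (hdiff q hq)
  have e2 : pd2 h =ᶠ[nhds p] fun q => fderiv ℝ h q (0, 1) :=
    eventually_of_mem (hU.mem_nhds hp) fun q hq => pd2_eq_fderiv (hdiff q hq)
  have hl1 : HasDerivAt (fun θ : ℝ => ((θ, p.2) : ℝ × ℝ)) ((1 : ℝ), (0 : ℝ)) p.1 :=
    (hasDerivAt_id p.1).prodMk (hasDerivAt_const p.1 p.2)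
  have hl2 : HasDerivAt (fun τ : ℝ => ((p.1, τ) : ℝ × ℝ)) ((0 : ℝ), (1 : ℝ)) p.2 :=
    (hasDerivAt_const p.2 p.1).prodMk (hasDerivAt_id p.2)
  have hc2 : HasDerivAt (fun τ => fderiv ℝ h (p.1, τ)) (fderiv ℝ (fderiv ℝ h) p (0, 1)) p.2 :=
    hd'.hasFDerivAt.comp_hasDerivAt p.2 hl2
  have hc1 : HasDerivAt (fun θ => fderiv ℝ h (θ, p.2)) (fderiv ℝ (fderiv ℝ h) p (1, 0)) p.1 :=
    hd'.hasFDerivAt.comp_hasDerivAt p.1 hl1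
  have hA : HasDerivAt (fun τ => fderiv ℝ h (p.1, τ) ((1 : ℝ), (0 : ℝ)))
      (fderiv ℝ (fderiv ℝ h) p (0, 1) ((1 : ℝ), (0 : ℝ))) p.2 := by
    simpa using
      hc2.clm_apply (hasDerivAt_const p.2 ((1 : ℝ), (0 : ℝ)))
  have hB : HasDerivAt (fun θ => fderiv ℝ h (θ, p.2) ((0 : ℝ), (1 : ℝ)))
      (fderiv ℝ (fderiv ℝ h) p (1, 0) ((0 : ℝ), (1 : ℝ))) p.1 := by
    simpa using
      hc1.clm_apply (hasDerivAt_const p.1 ((0 : ℝ), (1 : ℝ)))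
  calc pd2 (pd1 h) p = pd2 (fun q => fderiv ℝ h q (1, 0)) p := pd2_congr_nhds e1
    _ = fderiv ℝ (fderiv ℝ h) p (0, 1) ((1 : ℝ), (0 : ℝ)) := hA.deriv
    _ = fderiv ℝ (fderiv ℝ h) p (1, 0) ((0 : ℝ), (1 : ℝ)) := hsymm _ _
    _ = pd1 (fun q => fderiv ℝ h q (0, 1)) p := hB.deriv.symm
    _ = pd1 (pd2 h) p := (pd1_congr_nhds e2).symm



lemma second_deriv_nonneg_of_min {F : ℝ → ℝ} (hF : ContDiff ℝ (⊤ : ℕ∞) F) {x : ℝ}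
    (hmin : ∀ y, F x ≤ F y) : 0 ≤ deriv (deriv F) x := by
  by_contra hneg
  push_neg at hneg
  have hdF : ContDiff ℝ (⊤ : ℕ∞) (deriv F) := (contDiff_infty_iff_deriv.mp hF).2
  have hlm : IsLocalMin F x := Filter.Eventually.of_forall hmin
  have h0 : deriv F x = 0 := hlm.deriv_eq_zero
  have hd2 : HasDerivAt (deriv F) (deriv (deriv F) x) x :=
    ((hdF.differentiable (by simp)) x).hasDerivAt
  have hslope : Tendsto (slope (deriv F) x) (nhdsWithin x (Ioi x)) (nhds (deriv (deriv F) x)) :=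
    (hasDerivAt_iff_tendsto_slope.mp hd2).mono_left
      (nhdsWithin_mono x fun y (hy : y ∈ Ioi x) => (ne_of_gt hy : y ≠ x))
  have hev : ∀ᶠ y in nhdsWithin x (Ioi x), slope (deriv F) x y < 0 :=
    hslope.eventually_lt_const hneg
  obtain ⟨b, hb, hsub⟩ := mem_nhdsGT_iff_exists_Ioo_subset.mp hev
  have hxb : x < b := hb
  have hderivneg : ∀ y ∈ Ioo x b, deriv F y < 0 := by
    intro y hy
    have hs : (y - x)⁻¹ * (deriv F y - deriv F x) < 0 := by
      simpa [slope] using hsub hy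
    rw [inv_mul_eq_div] at hs
    rw [h0, sub_zero] at hs
    have hyx : (0 : ℝ) < y - x := sub_pos.mpr hy.1
    rcases div_neg_iff.mp hs with ⟨_, h2⟩ | ⟨h1, _⟩
    · linarith
    · exact h1
  set m := (x + b) / 2 with hm
  have hxm : x < m := by simp only [hm]; linarith
  have hmb : m < b := by simp only [hm]; linarith
  have hanti : StrictAntiOn F (Icc x m) := by
    refine strictAntiOn_of_deriv_neg (convex_Icc x m) (hF.continuous.continuousOn) ?_
    intro y hy
    rw [interior_Icc] at hy
    exact hderivneg y ⟨hy.1, lt_trans hy.2 hmb⟩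
  have := hanti (left_mem_Icc.mpr hxm.le) (right_mem_Icc.mpr hxm.le) hxm
  exact absurd (hmin m) (not_le.mpr this)

lemma hasDerivAt_nonpos_of_left {φ : ℝ → ℝ} {x d : ℝ} (hd : HasDerivAt φ d x)
    (h : ∀ᶠ y in nhdsWithin x (Iio x), φ x ≤ φ y) : d ≤ 0 := by
  have hslope : Tendsto (slope φ x) (nhdsWithin x (Iio x)) (nhds d) :=
    (hasDerivAt_iff_tendsto_slope.mp hd).mono_left
      (nhdsWithin_mono x fun y (hy : y ∈ Iio x) => (ne_of_lt hy : y ≠ x))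
  refine le_of_tendsto hslope ?_
  filter_upwards [h, self_mem_nhdsWithin] with y hy hyx
  have h1 : (0 : ℝ) ≤ φ y - φ x := by linarith
  have h2 : y - x < 0 := sub_neg.mpr hyx
  have h3 : slope φ x y = (y - x)⁻¹ * (φ y - φ x) := by simp [slope]
  rw [h3, inv_mul_eq_div]
  exact div_nonpos_of_nonneg_of_nonpos h1 h2.le

lemma periodic_deriv {h : ℝ → ℝ} {c : ℝ} (hp : Function.Periodic h c) :
    Function.Periodic (deriv h) c := by
  intro x
  have he : (fun y => h (y + c)) = h := funext fun y => hp y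
  calc deriv h (x + c) = deriv (fun y => h (y + c)) x := (deriv_comp_add_const h c x).symm
    _ = deriv h x := by rw [he]





set_option maxHeartbeats 2000000 in
/-- The key computations: regularity, the PDE for `f`, and its evolution equation. -/
theorem harnack_aux (g : ℝ → ℝ) (hg : ContDiff ℝ (⊤ : ℕ∞) g) (hgpos : ∀ x, 0 < g x)
    (hgper : Function.Periodic g (2 * π))
    (α T : ℝ) (hαT : α < T) (κ w u f : ℝ × ℝ → ℝ)
    (hκ : ContDiffOn ℝ (⊤ : ℕ∞) κ (univ ×ˢ Ico α T))
    (hκpos : ∀ θ τ, τ ∈ Ico α T → 0 < κ (θ, τ))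
    (hκper : ∀ θ τ, τ ∈ Ico α T → κ (θ + 2 * π, τ) = κ (θ, τ))
    (hwE : w = fun q => g q.1 * κ q)
    (huE : u = pd1 (pd1 w))
    (hfE : f = fun q => κ q * (u q + w q))
    (hpde : ∀ θ τ, τ ∈ Ioo α T → pd2 κ (θ, τ) = κ (θ, τ) ^ 2 * (u (θ, τ) + w (θ, τ))) :
    ∀ θ τ, τ ∈ Ioo α T → 0 ≤ f (θ, τ) + 1 / (2 * (τ - α)) := by
  -- setup
  set U : Set (ℝ × ℝ) := univ ×ˢ Ioo α T with hUdef
  have hUo : IsOpen U := isOpen_univ.prod isOpen_Ioo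
  have hUsub : U ⊆ univ ×ˢ Ico α T := prod_mono (subset_refl _) Ioo_subset_Ico_self
  have memU : ∀ {q : ℝ × ℝ}, q.2 ∈ Ioo α T → q ∈ U := fun hq2 => ⟨mem_univ _, hq2⟩
  have hκU : ContDiffOn ℝ (⊤ : ℕ∞) κ U := hκ.mono hUsub
  have hwU : ContDiffOn ℝ (⊤ : ℕ∞) w U := by
    rw [hwE]; exact ((hg.comp contDiff_fst).contDiffOn).mul hκU
  have huU : ContDiffOn ℝ (⊤ : ℕ∞) u U := by
    rw [huE]; exact pd1_contDiffOn hUo (pd1_contDiffOn hUo hwU)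
  have hfU : ContDiffOn ℝ (⊤ : ℕ∞) f U := by
    rw [hfE]; exact hκU.mul (huU.add hwU)
  have hfc : ContinuousOn f U := hfU.continuousOn
  have hκpos' : ∀ q ∈ U, 0 < κ q := fun q hq => hκpos q.1 q.2 (hUsub hq).2
  have hwpos : ∀ q ∈ U, 0 < w q := fun q hq => by
    rw [hwE]; exact mul_pos (hgpos q.1) (hκpos' q hq)
  -- the PDE in terms of f
  have hpde' : ∀ q ∈ U, pd2 κ q = κ q * f q := by
    intro q hq
    have h1 := hpde q.1 q.2 hq.2
    show pd2 κ (q.1, q.2) = κ (q.1, q.2) * f (q.1, q.2)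
    rw [h1]; simp only [hfE]; ring
  -- time derivative of w
  have hw2 : ∀ q ∈ U, pd2 w q = w q * f q := by
    intro q hq
    have hκd : DifferentiableAt ℝ κ q := diffAt hUo hκU hq
    have hκs : HasDerivAt (fun τ => κ (q.1, τ)) (pd2 κ q) q.2 := pd2_hasDerivAt hκd
    have hws : HasDerivAt (fun τ => w (q.1, τ)) (g q.1 * pd2 κ q) q.2 := by
      simp only [hwE]
      exact hκs.const_mul (g q.1)
    have h2 : pd2 w q = g q.1 * pd2 κ q := hws.deriv
    rw [h2, hpde' q hq]
    simp only [hwE]; ring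
  -- mixed derivative
  have hmix : ∀ q ∈ U, pd2 (pd1 w) q = pd1 w q * f q + w q * pd1 f q := by
    intro q hq
    have h1 : pd2 (pd1 w) q = pd1 (pd2 w) q := pd_comm hUo hwU hq
    have h2 : pd1 (pd2 w) q = pd1 (fun r => w r * f r) q := pd1_congr_open hUo hq hw2
    have hwd : DifferentiableAt ℝ w q := diffAt hUo hwU hq
    have hfd : DifferentiableAt ℝ f q := diffAt hUo hfU hq
    have h3 := (pd1_hasDerivAt hwd).mul (pd1_hasDerivAt hfd)
    have h4 : pd1 (fun r => w r * f r) q = pd1 w q * f q + w q * pd1 f q := h3.deriv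
    rw [h1, h2, h4]
  -- evolution equation for f
  have hevol : ∀ q ∈ U, pd2 f q
      = 2 * f q ^ 2 + 2 * (κ q * pd1 w q * pd1 f q) + κ q * w q * pd1 (pd1 f) q := by
    intro q hq
    have hκd := diffAt hUo hκU hq
    have hwd := diffAt hUo hwU hq
    have hud := diffAt hUo huU hq
    have hfd := diffAt hUo hfU hq
    have hp1wU : ContDiffOn ℝ (⊤ : ℕ∞) (pd1 w) U := pd1_contDiffOn hUo hwU
    have hp1fU : ContDiffOn ℝ (⊤ : ℕ∞) (pd1 f) U := pd1_contDiffOn hUo hfU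
    have hp1wd := diffAt hUo hp1wU hq
    have hp1fd := diffAt hUo hp1fU hq
    have hu2 : pd2 u q = u q * f q + 2 * (pd1 w q * pd1 f q) + w q * pd1 (pd1 f) q := by
      have h1 : pd2 u q = pd1 (pd2 (pd1 w)) q := by
        rw [huE]; exact pd_comm hUo hp1wU hq
      have h2 : pd1 (pd2 (pd1 w)) q = pd1 (fun r => pd1 w r * f r + w r * pd1 f r) q :=
        pd1_congr_open hUo hq hmix
      have h3 := ((pd1_hasDerivAt hp1wd).mul (pd1_hasDerivAt hfd)).add
          ((pd1_hasDerivAt hwd).mul (pd1_hasDerivAt hp1fd))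
      have h4 : pd1 (fun r => pd1 w r * f r + w r * pd1 f r) q
          = pd1 (pd1 w) q * f q + pd1 w q * pd1 f q
            + (pd1 w q * pd1 f q + w q * pd1 (pd1 f) q) := h3.deriv
      rw [h1, h2, h4, ← huE]; ring
    have hfs : HasDerivAt (fun τ => κ (q.1, τ) * (u (q.1, τ) + w (q.1, τ)))
        (pd2 κ q * (u q + w q) + κ q * (pd2 u q + pd2 w q)) q.2 :=
      (pd2_hasDerivAt hκd).mul ((pd2_hasDerivAt hud).add (pd2_hasDerivAt hwd))
    have h4 : pd2 f q = pd2 κ q * (u q + w q) + κ q * (pd2 u q + pd2 w q) := by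
      have he : (fun τ => f (q.1, τ)) = fun τ => κ (q.1, τ) * (u (q.1, τ) + w (q.1, τ)) := by
        funext τ; rw [hfE]
      show deriv (fun τ => f (q.1, τ)) q.2 = _
      rw [he, hfs.deriv]
    rw [h4, hpde' q hq, hu2, hw2 q hq]
    simp only [hfE]; ring
  -- periodicity of f in θ
  have hwper : ∀ τ, τ ∈ Ico α T → Function.Periodic (fun θ => w (θ, τ)) (2 * π) := by
    intro τ hτ θ
    simp only [hwE]
    rw [hgper θ, hκper θ τ hτ]
  have hp1wper : ∀ τ, τ ∈ Ico α T → Function.Periodic (fun θ => pd1 w (θ, τ)) (2 * π) := by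
    intro τ hτ
    have he : (fun θ => pd1 w (θ, τ)) = deriv (fun θ => w (θ, τ)) := rfl
    rw [he]; exact periodic_deriv (hwper τ hτ)
  have huper : ∀ τ, τ ∈ Ico α T → Function.Periodic (fun θ => u (θ, τ)) (2 * π) := by
    intro τ hτ
    have he : (fun θ => u (θ, τ)) = deriv (fun θ => pd1 w (θ, τ)) := by rw [huE]; rfl
    rw [he]; exact periodic_deriv (hp1wper τ hτ)
  have hfper : ∀ τ, τ ∈ Ico α T → Function.Periodic (fun θ => f (θ, τ)) (2 * π) := by
    intro τ hτ θ
    simp only [hfE]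
    rw [show κ (θ + 2 * π, τ) = κ (θ, τ) from hκper θ τ hτ,
      show u (θ + 2 * π, τ) = u (θ, τ) from huper τ hτ θ,
      show w (θ + 2 * π, τ) = w (θ, τ) from hwper τ hτ θ]
  have hred : ∀ (θ τ : ℝ), τ ∈ Ico α T → ∃ θ' ∈ Icc 0 (2 * π), f (θ', τ) = f (θ, τ) := by
    intro θ τ hτ
    refine ⟨θ - ⌊θ / (2 * π)⌋ * (2 * π), ⟨Int.sub_floor_div_mul_nonneg θ Real.two_pi_pos,
      (Int.sub_floor_div_mul_lt θ Real.two_pi_pos).le⟩, ?_⟩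
    exact (hfper τ hτ).sub_int_mul_eq ⌊θ / (2 * π)⌋
  -- the main barrier argument
  intro θh τh hτh
  have hτhT : τh < T := hτh.2
  have key : ∀ a ∈ Ioo α τh, 0 ≤ f (θh, τh) + 1 / (2 * (τh - a)) := by
    intro a ha
    by_contra hcon
    push_neg at hcon
    have haα : α < a := ha.1
    have haτ : a < τh := ha.2
    set ε : ℝ := -(f (θh, τh) + 1 / (2 * (τh - a))) / 2 with hε
    have hεpos : 0 < ε := by rw [hε]; linarith
    set B : ℝ → ℝ := fun τ => 1 / (2 * (τ - a)) + ε with hB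
    -- bound on the rectangle
    have hRcomp : IsCompact (Icc 0 (2 * π) ×ˢ Icc a τh) := isCompact_Icc.prod isCompact_Icc
    have hRU : Icc 0 (2 * π) ×ˢ Icc a τh ⊆ U := by
      intro q hq
      exact memU ⟨lt_of_lt_of_le haα hq.2.1, lt_of_le_of_lt hq.2.2 hτhT⟩
    obtain ⟨M, hM⟩ := hRcomp.exists_bound_of_continuousOn (hfc.mono hRU)
    -- choice of δ
    set δ : ℝ := min (τh - a) (1 / (2 * (|M| + 1))) with hδ
    have hδpos : 0 < δ := lt_min (by linarith) (by positivity)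
    have hδ1 : δ ≤ τh - a := min_le_left _ _
    have hδ2 : |M| + 1 ≤ 1 / (2 * δ) := by
      have h2 : δ ≤ 1 / (2 * (|M| + 1)) := min_le_right _ _
      have h3 : (0 : ℝ) < |M| + 1 := by positivity
      rw [le_div_iff₀ (by positivity : (0 : ℝ) < 2 * δ)]
      calc (|M| + 1) * (2 * δ) ≤ (|M| + 1) * (2 * (1 / (2 * (|M| + 1)))) := by nlinarith
        _ = 1 := by field_simp
    -- at the starting time a + δ the barrier dominates
    have hstart : ∀ θ : ℝ, 0 < B (a + δ) + f (θ, a + δ) := by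
      intro θ
      have hmem : a + δ ∈ Ico α T := ⟨by linarith, by linarith⟩
      obtain ⟨θ', hθ'I, hθ'eq⟩ := hred θ (a + δ) hmem
      have hin : (θ', a + δ) ∈ Icc 0 (2 * π) ×ˢ Icc a τh :=
        Set.mk_mem_prod hθ'I ⟨by linarith, by linarith⟩
      have h5 : |f (θ', a + δ)| ≤ M := by simpa [Real.norm_eq_abs] using hM _ hin
      have habs : -f (θ', a + δ) ≤ |M| := by
        have h6 := abs_le.mp (h5.trans (le_abs_self M))
        linarith [h6.1]
      have hBv : B (a + δ) = 1 / (2 * δ) + ε := by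
        simp only [hB, add_sub_cancel_left]
      rw [← hθ'eq, hBv]
      linarith
    -- the set of violation
    set R' : Set (ℝ × ℝ) := Icc 0 (2 * π) ×ˢ Icc (a + δ) τh with hR'
    have hR'U : R' ⊆ U := by
      intro q hq
      exact hRU ⟨hq.1, ⟨by linarith [hq.2.1], hq.2.2⟩⟩
    have hR'comp : IsCompact R' := isCompact_Icc.prod isCompact_Icc
    have hR'closed : IsClosed R' := isClosed_Icc.prod isClosed_Icc
    set K : Set (ℝ × ℝ) := R' ∩ (fun q : ℝ × ℝ => B q.2 + f q) ⁻¹' Iic 0 with hK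
    have hKclosed : IsClosed K := by
      have hcont : ContinuousOn (fun q : ℝ × ℝ => B q.2 + f q) R' := by
        apply ContinuousOn.add
        · apply ContinuousOn.add ?_ continuousOn_const
          apply ContinuousOn.div continuousOn_const
          · exact (continuous_const.mul (continuous_snd.sub continuous_const)).continuousOn
          · intro q hq
            have h7 : a + δ ≤ q.2 := hq.2.1
            have : (0 : ℝ) < 2 * (q.2 - a) := by nlinarith
            exact this.ne'
        · exact hfc.mono hR'U
      exact hcont.preimage_isClosed_of_isClosed hR'closed isClosed_Iic
    have hKcomp : IsCompact K := hR'comp.of_isClosed_subset hKclosed inter_subset_left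
    -- K is nonempty
    obtain ⟨θh', hθh'I, hθh'eq⟩ := hred θh τh (Ioo_subset_Ico_self hτh)
    have hτhK : (θh', τh) ∈ K := by
      refine ⟨Set.mk_mem_prod hθh'I ⟨by linarith, le_refl τh⟩, ?_⟩
      show B τh + f (θh', τh) ≤ 0
      rw [hθh'eq]
      simp only [hB]
      rw [hε] at hεpos ⊢
      linarith
    obtain ⟨q0, hq0K, hq0min⟩ := hKcomp.exists_isMinOn ⟨_, hτhK⟩ continuous_snd.continuousOn
    have hq0R' : q0 ∈ R' := hq0K.1
    have hq0le : B q0.2 + f q0 ≤ 0 := hq0K.2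
    have hq0min' : ∀ q ∈ K, q0.2 ≤ q.2 := fun q hq => hq0min hq
    have hq0U : q0 ∈ U := hR'U hq0R'
    have hτ0mem : q0.2 ∈ Icc (a + δ) τh := hq0R'.2
    -- the violation time is strictly after the start
    have hτ0gt : a + δ < q0.2 := by
      rcases lt_or_eq_of_le hτ0mem.1 with h | h
      · exact h
      · exfalso
        have h3 := hstart q0.1
        rw [h] at h3
        have h2 : (0 : ℝ) < B q0.2 + f q0 := h3
        linarith
    -- before time q0.2 there is no violation
    have claim1 : ∀ (θ τ : ℝ), τ ∈ Ico (a + δ) q0.2 → 0 < B τ + f (θ, τ) := by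
      intro θ τ hτmem
      by_contra hc
      push_neg at hc
      have hτT : τ ∈ Ico α T :=
        ⟨by linarith [hτmem.1], by linarith [hτmem.2, hτ0mem.2]⟩
      obtain ⟨θ', hθ'I, hθ'eq⟩ := hred θ τ hτT
      have hmem : (θ', τ) ∈ K := by
        refine ⟨Set.mk_mem_prod hθ'I ⟨hτmem.1, by linarith [hτmem.2, hτ0mem.2]⟩, ?_⟩
        show B τ + f (θ', τ) ≤ 0
        rw [hθ'eq]; exact hc
      have h15 := hq0min' _ hmem
      have h9 : q0.2 ≤ τ := h15
      have h8 := hτmem.2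
      linarith
    -- at time q0.2, θ ↦ f (θ, q0.2) attains its minimum value -B q0.2
    have claim2b : ∀ θ : ℝ, -B q0.2 ≤ f (θ, q0.2) := by
      intro θ
      by_contra hc
      push_neg at hc
      have hU' : (θ, q0.2) ∈ U :=
        memU ⟨by linarith [hτ0gt, hδpos, haα], lt_of_le_of_lt hτ0mem.2 hτhT⟩
      have hcontf : ContinuousAt (fun τ => f (θ, τ)) q0.2 := by
        have h9 : ContinuousAt f (θ, q0.2) := hfc.continuousAt (hUo.mem_nhds hU')
        exact h9.comp ((continuous_const.prodMk continuous_id).continuousAt)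
      have hcontB : ContinuousAt B q0.2 := by
        simp only [hB]
        apply ContinuousAt.add ?_ continuousAt_const
        apply ContinuousAt.div continuousAt_const
        · exact (continuous_const.mul (continuous_id.sub continuous_const)).continuousAt
        · have : (0 : ℝ) < 2 * (q0.2 - a) := by nlinarith [hτ0gt, hδpos]
          exact this.ne'
      have hev : ∀ᶠ τ in nhds q0.2, B τ + f (θ, τ) < 0 := by
        have h10 : ContinuousAt (fun τ => B τ + f (θ, τ)) q0.2 := hcontB.add hcontf
        have h11 : B q0.2 + f (θ, q0.2) < 0 := by linarith
        exact h10.eventually_lt_const h11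
      have hev2 : ∀ᶠ τ in nhdsWithin q0.2 (Iio q0.2),
          (B τ + f (θ, τ) < 0) ∧ τ ∈ Ioo (a + δ) q0.2 := by
        filter_upwards [nhdsWithin_le_nhds hev, Ioo_mem_nhdsLT hτ0gt] with τ h1 h2
        exact ⟨h1, h2⟩
      obtain ⟨τ1, hτ1neg, hτ1mem⟩ := hev2.exists
      have := claim1 θ τ1 ⟨hτ1mem.1.le, hτ1mem.2⟩
      linarith
    have claim2 : ∀ θ : ℝ, f q0 ≤ f (θ, q0.2) := by
      intro θ
      have h1 : f q0 ≤ -B q0.2 := by linarith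
      exact h1.trans (claim2b θ)
    have hfq0 : f q0 = -B q0.2 := by
      have h1 : -B q0.2 ≤ f q0 := claim2b q0.1
      have h2 : f q0 ≤ -B q0.2 := by linarith
      linarith
    -- first spatial derivative vanishes, second is nonnegative
    have hp1fq0 : pd1 f q0 = 0 := by
      have hloc : IsLocalMin (fun θ => f (θ, q0.2)) q0.1 :=
        Filter.Eventually.of_forall (fun θ => claim2 θ)
      exact hloc.deriv_eq_zero
    have hp1p1f : 0 ≤ pd1 (pd1 f) q0 := by
      have hslice : ContDiff ℝ (⊤ : ℕ∞) (fun θ => f (θ, q0.2)) := by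
        rw [← contDiffOn_univ]
        refine hfU.comp ((contDiff_id.prodMk contDiff_const).contDiffOn) ?_
        intro θ _
        exact memU ⟨by linarith [hτ0gt, hδpos, haα], lt_of_le_of_lt hτ0mem.2 hτhT⟩
      have h2 := second_deriv_nonneg_of_min hslice (x := q0.1) (fun y => claim2 y)
      exact h2
    -- time derivative at q0 is nonpositive
    have hspos : 0 < q0.2 - a := by linarith [hτ0gt, hδpos]
    have hφd : HasDerivAt (fun τ => f (q0.1, τ) + B τ)
        (pd2 f q0 + -2 / (2 * (q0.2 - a)) ^ 2) q0.2 := by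
      have h1 : HasDerivAt (fun τ => f (q0.1, τ)) (pd2 f q0) q0.2 :=
        pd2_hasDerivAt (diffAt hUo hfU hq0U)
      have h3 : HasDerivAt (fun τ : ℝ => 2 * (τ - a)) 2 q0.2 := by
        simpa using ((hasDerivAt_id q0.2).sub_const a).const_mul 2
      have hne : (2 : ℝ) * (q0.2 - a) ≠ 0 := by
        have : (0 : ℝ) < 2 * (q0.2 - a) := by linarith
        exact this.ne'
      have h4 := h3.inv hne
      have h5 := h4.add_const ε
      have h2 : HasDerivAt B (-2 / (2 * (q0.2 - a)) ^ 2) q0.2 := by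
        rw [hB]
        simpa [one_div] using h5
      exact h1.add h2
    have hφle : pd2 f q0 + -2 / (2 * (q0.2 - a)) ^ 2 ≤ 0 := by
      apply hasDerivAt_nonpos_of_left hφd
      have hφτ0 : f (q0.1, q0.2) + B q0.2 = 0 := by
        have h7 : f (q0.1, q0.2) = f q0 := rfl
        rw [h7, hfq0]; ring
      filter_upwards [Ioo_mem_nhdsLT hτ0gt] with τ hτmem
      have h12 := claim1 q0.1 τ ⟨hτmem.1.le, hτmem.2⟩
      rw [hφτ0]
      linarith
    -- the evolution equation gives a contradiction
    have hev := hevol q0 hq0U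
    rw [hp1fq0] at hev
    have hBval : B q0.2 = 1 / (2 * (q0.2 - a)) + ε := by simp only [hB]
    have hfval : f q0 = -(1 / (2 * (q0.2 - a)) + ε) := by rw [hfq0, hBval]
    have hκq0 := hκpos' q0 hq0U
    have hwq0 := hwpos q0 hq0U
    have h8 : 2 * f q0 ^ 2 ≤ pd2 f q0 := by
      rw [hev]
      nlinarith [mul_pos hκq0 hwq0, hp1p1f, mul_nonneg (mul_pos hκq0 hwq0).le hp1p1f]
    have h9 : 2 * f q0 ^ 2 = 2 * (1 / (2 * (q0.2 - a)) + ε) ^ 2 := by rw [hfval]; ring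
    have h10 : (0 : ℝ) < 1 / (2 * (q0.2 - a)) :=
      div_pos one_pos (by linarith : (0 : ℝ) < 2 * (q0.2 - a))
    have h11 : 2 / (2 * (q0.2 - a)) ^ 2 < 2 * (1 / (2 * (q0.2 - a)) + ε) ^ 2 := by
      have hne2 : (2 * (q0.2 - a)) ≠ 0 := by
        have hpos2 : (0 : ℝ) < 2 * (q0.2 - a) := by linarith
        exact hpos2.ne'
      have he : 2 * (1 / (2 * (q0.2 - a))) ^ 2 = 2 / (2 * (q0.2 - a)) ^ 2 := by
        rw [div_pow, one_pow, mul_one_div]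
      nlinarith [he, mul_pos h10 hεpos, sq_nonneg ε]
    have h13 : -2 / (2 * (q0.2 - a)) ^ 2 = -(2 / (2 * (q0.2 - a)) ^ 2) := by ring
    rw [h13] at hφle
    linarith
  -- pass to the limit a → α⁺
  have hlim : Tendsto (fun a => f (θh, τh) + 1 / (2 * (τh - a))) (nhdsWithin α (Ioi α))
      (nhds (f (θh, τh) + 1 / (2 * (τh - α)))) := by
    apply Tendsto.mono_left ?_ nhdsWithin_le_nhds
    apply ContinuousAt.tendsto
    apply ContinuousAt.add continuousAt_const
    apply ContinuousAt.div continuousAt_const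
    · exact (continuous_const.mul (continuous_const.sub continuous_id)).continuousAt
    · have : (0 : ℝ) < 2 * (τh - α) := by nlinarith [hτh.1]
      exact this.ne'
  have hevα : ∀ᶠ a in nhdsWithin α (Ioi α), 0 ≤ f (θh, τh) + 1 / (2 * (τh - a)) := by
    filter_upwards [Ioo_mem_nhdsGT hτh.1] with a ha
    exact key a ha
  exact ge_of_tendsto hlim hevα



end ACSFAux

/-- **Harnack-type inequality.** If `κ > 0` is smooth, `2π`-periodic in `θ`,
and satisfies `∂_τ κ = κ² (∂²_θ(gκ) + gκ)` on `[α, T)`, then for all `θ` and all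
`τ ∈ (α, T)` one has `κ (∂²_θ(gκ) + gκ) + 1/(2(τ − α)) ≥ 0`. -/
theorem acsf_harnack_inequality
    (g : ℝ → ℝ) (hg : ContDiff ℝ (⊤ : ℕ∞) g) (hgpos : ∀ x, 0 < g x)
    (hgper : Function.Periodic g (2 * π))
    (α T : ℝ) (hαT : α < T)
    (κ : ℝ × ℝ → ℝ)
    (hκ : ContDiffOn ℝ (⊤ : ℕ∞) κ (univ ×ˢ Ico α T))
    (hκpos : ∀ θ : ℝ, ∀ τ ∈ Ico α T, 0 < κ (θ, τ))
    (hκper : ∀ θ : ℝ, ∀ τ ∈ Ico α T, κ (θ + 2 * π, τ) = κ (θ, τ))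
    (hpde : ∀ θ : ℝ, ∀ τ ∈ Ioo α T,
      pd2 κ (θ, τ) =
        (κ (θ, τ)) ^ 2 * (pd1 (pd1 fun q => g q.1 * κ q) (θ, τ) + g θ * κ (θ, τ))) :
    ∀ θ : ℝ, ∀ τ ∈ Ioo α T,
      0 ≤ κ (θ, τ) * (pd1 (pd1 fun q => g q.1 * κ q) (θ, τ) + g θ * κ (θ, τ)) +
        1 / (2 * (τ - α)) := by
  intro θ τ hτ
  exact ACSFAux.harnack_aux g (hg.of_le (by simp)) hgpos hgper α T hαT κ
    (fun q => g q.1 * κ q) (pd1 (pd1 fun q => g q.1 * κ q))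
    (fun q => κ q * (pd1 (pd1 fun r => g r.1 * κ r) q + g q.1 * κ q))
    (hκ.of_le (by simp)) hκpos hκper rfl rfl rfl hpde θ τ hτ
end
end

section
/- Let g : ℝ → ℝ be smooth, 2π-periodic and strictly positive, let α < T, and let κ : ℝ × [α, T) → ℝ be smooth, strictly positive, 2π-periodic in its first variable θ, and satisfy ∂_τ κ = κ²(∂²_θ(gκ) + gκ). Then for each fixed θ, the function τ ↦ κ(θ, τ)·√(τ − α) is nondecreasing on (α, T). -/
noncomputable section

open Real Set Filter

open Topology
open scoped ContDiff

lemma hone : (∞ : WithTop ℕ∞) ≠ 0 := by simp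

lemma hinf : (∞ : WithTop ℕ∞) + 1 ≤ ∞ := le_of_eq rfl

lemma hasDerivAt_slice1 {f : ℝ × ℝ → ℝ} {L : ℝ × ℝ →L[ℝ] ℝ} {x y : ℝ}
    (h : HasFDerivAt f L (x, y)) : HasDerivAt (fun t => f (t, y)) (L (1, 0)) x := by
  have hl : HasDerivAt (fun t : ℝ => (t, y)) ((1 : ℝ), (0 : ℝ)) x :=
    (hasDerivAt_id x).prodMk (hasDerivAt_const x y)
  exact h.comp_hasDerivAt x hl

lemma hasDerivAt_slice2 {f : ℝ × ℝ → ℝ} {L : ℝ × ℝ →L[ℝ] ℝ} {x y : ℝ}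
    (h : HasFDerivAt f L (x, y)) : HasDerivAt (fun t => f (x, t)) (L (0, 1)) y := by
  have hl : HasDerivAt (fun t : ℝ => (x, t)) ((0 : ℝ), (1 : ℝ)) y :=
    (hasDerivAt_const y x).prodMk (hasDerivAt_id y)
  exact h.comp_hasDerivAt y hl

lemma pd1_eq_fderiv {f : ℝ × ℝ → ℝ} {s : Set (ℝ × ℝ)} (hs : IsOpen s)
    (hf : ContDiffOn ℝ ∞ f s) {p : ℝ × ℝ} (hp : p ∈ s) :
    pd1 f p = fderiv ℝ f p (1, 0) := by
  have h : HasFDerivAt f (fderiv ℝ f p) p :=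
    ((hf.contDiffAt (hs.mem_nhds hp)).differentiableAt hone).hasFDerivAt
  rw [← Prod.mk.eta (p := p)] at h
  exact (hasDerivAt_slice1 h).deriv

lemma pd2_eq_fderiv {f : ℝ × ℝ → ℝ} {s : Set (ℝ × ℝ)} (hs : IsOpen s)
    (hf : ContDiffOn ℝ ∞ f s) {p : ℝ × ℝ} (hp : p ∈ s) :
    pd2 f p = fderiv ℝ f p (0, 1) := by
  have h : HasFDerivAt f (fderiv ℝ f p) p :=
    ((hf.contDiffAt (hs.mem_nhds hp)).differentiableAt hone).hasFDerivAt
  rw [← Prod.mk.eta (p := p)] at h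
  exact (hasDerivAt_slice2 h).deriv


/-- Smoothness of the first partial derivative, on a set closed under horizontal lines. -/
lemma contDiffOn_pd1 {f : ℝ × ℝ → ℝ} {U : Set (ℝ × ℝ)} (hU : UniqueDiffOn ℝ U)
    (hline : ∀ p ∈ U, ∀ t : ℝ, ((t, p.2) : ℝ × ℝ) ∈ U)
    (hf : ContDiffOn ℝ ∞ f U) : ContDiffOn ℝ ∞ (pd1 f) U := by
  have key : ∀ p ∈ U, pd1 f p = fderivWithin ℝ f U p (1, 0) := by
    intro p hp
    have hd : HasFDerivWithinAt f (fderivWithin ℝ f U p) U p :=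
      (hf.differentiableOn hone p hp).hasFDerivWithinAt
    have hl : HasDerivWithinAt (fun t : ℝ => ((t, p.2) : ℝ × ℝ)) ((1 : ℝ), (0 : ℝ)) univ p.1 :=
      ((hasDerivAt_id p.1).prodMk (hasDerivAt_const p.1 p.2)).hasDerivWithinAt
    have hcomp := hd.comp_hasDerivWithinAt_of_eq p.1 hl (fun t _ => hline p hp t)
      (Prod.mk.eta (p := p)).symm
    rw [hasDerivWithinAt_univ] at hcomp
    exact hcomp.deriv
  have F1 : ContDiffOn ℝ ∞ (fun p => fderivWithin ℝ f U p ((1 : ℝ), (0 : ℝ))) U :=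
    (hf.fderivWithin hU hinf).clm_apply contDiffOn_const
  exact F1.congr key

/-- Clairaut / Schwarz: mixed partials commute at points of an open set of smoothness. -/
lemma pd_comm {f : ℝ × ℝ → ℝ} {s : Set (ℝ × ℝ)} (hs : IsOpen s)
    (hf : ContDiffOn ℝ ∞ f s) {p : ℝ × ℝ} (hp : p ∈ s) :
    pd2 (pd1 f) p = pd1 (pd2 f) p := by
  set f' := fderiv ℝ f with hf'def
  set f'' := fderiv ℝ f' p with hf''def
  have hsmem : s ∈ 𝓝 p := hs.mem_nhds hp
  have hdiff : ∀ q ∈ s, HasFDerivAt f (f' q) q := fun q hq =>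
    ((hf.contDiffAt (hs.mem_nhds hq)).differentiableAt hone).hasFDerivAt
  have hf'cd : ContDiffOn ℝ ∞ f' s := hf.fderiv_of_isOpen hs hinf
  have hf'' : HasFDerivAt f' f'' p :=
    ((hf'cd.contDiffAt (hs.mem_nhds hp)).differentiableAt hone).hasFDerivAt
  have hsymm : ∀ v w : ℝ × ℝ, f'' v w = f'' w v := by
    intro v w
    exact second_derivative_symmetric_of_eventually
      (Filter.eventually_of_mem hsmem hdiff) hf'' v w
  -- vertical line of the first partial
  have hvert : ∀ᶠ t in 𝓝 p.2, ((p.1, t) : ℝ × ℝ) ∈ s := by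
    have hc : Continuous (fun t : ℝ => ((p.1, t) : ℝ × ℝ)) := by fun_prop
    have : ((p.1, p.2) : ℝ × ℝ) ∈ s := by rw [Prod.mk.eta]; exact hp
    exact hc.continuousAt.eventually_mem (hs.mem_nhds this)
  have hhor : ∀ᶠ t in 𝓝 p.1, ((t, p.2) : ℝ × ℝ) ∈ s := by
    have hc : Continuous (fun t : ℝ => ((t, p.2) : ℝ × ℝ)) := by fun_prop
    have : ((p.1, p.2) : ℝ × ℝ) ∈ s := by rw [Prod.mk.eta]; exact hp
    exact hc.continuousAt.eventually_mem (hs.mem_nhds this)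
  -- compute pd2 (pd1 f) p
  have h1 : pd2 (pd1 f) p = f'' (0, 1) (1, 0) := by
    have heq : (fun t => pd1 f (p.1, t)) =ᶠ[𝓝 p.2] fun t => f' (p.1, t) (1, 0) :=
      hvert.mono fun t ht => pd1_eq_fderiv hs hf ht
    have : pd2 (pd1 f) p = deriv (fun t => f' (p.1, t) (1, 0)) p.2 := heq.deriv_eq
    rw [this]
    have hline : HasDerivAt (fun t : ℝ => ((p.1, t) : ℝ × ℝ)) ((0 : ℝ), (1 : ℝ)) p.2 :=
      (hasDerivAt_const p.2 p.1).prodMk (hasDerivAt_id p.2)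
    have hf''2 : HasFDerivAt f' f'' ((p.1, p.2) : ℝ × ℝ) := by rw [Prod.mk.eta]; exact hf''
    have hcl : HasDerivAt (fun t => f' (p.1, t)) (f'' (0, 1)) p.2 :=
      hf''2.comp_hasDerivAt p.2 hline
    have := hcl.clm_apply (hasDerivAt_const p.2 ((1 : ℝ), (0 : ℝ)))
    simpa using this.deriv
  have h2 : pd1 (pd2 f) p = f'' (1, 0) (0, 1) := by
    have heq : (fun t => pd2 f (t, p.2)) =ᶠ[𝓝 p.1] fun t => f' (t, p.2) (0, 1) :=
      hhor.mono fun t ht => pd2_eq_fderiv hs hf ht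
    have : pd1 (pd2 f) p = deriv (fun t => f' (t, p.2) (0, 1)) p.1 := heq.deriv_eq
    rw [this]
    have hline : HasDerivAt (fun t : ℝ => ((t, p.2) : ℝ × ℝ)) ((1 : ℝ), (0 : ℝ)) p.1 :=
      (hasDerivAt_id p.1).prodMk (hasDerivAt_const p.1 p.2)
    have hf''2 : HasFDerivAt f' f'' ((p.1, p.2) : ℝ × ℝ) := by rw [Prod.mk.eta]; exact hf''
    have hcl : HasDerivAt (fun t => f' (t, p.2)) (f'' (1, 0)) p.1 :=
      hf''2.comp_hasDerivAt p.1 hline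
    have := hcl.clm_apply (hasDerivAt_const p.1 ((0 : ℝ), (1 : ℝ)))
    simpa using this.deriv
  rw [h1, h2, hsymm]


lemma periodic_deriv' {f : ℝ → ℝ} {c : ℝ} (h : Function.Periodic f c) :
    Function.Periodic (deriv f) c := by
  intro x
  have hfn : (fun y : ℝ => f (y + c)) = f := funext h
  calc deriv f (x + c) = deriv (fun y => f (y + c)) x := by rw [deriv_comp_add_const]
    _ = deriv f x := by rw [hfn]

lemma second_deriv_nonneg_at_min {f f' : ℝ → ℝ} {d x : ℝ}
    (hf : ∀ y, HasDerivAt f (f' y) y) (hf' : HasDerivAt f' d x)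
    (hmin : ∀ y, f x ≤ f y) : 0 ≤ d := by
  by_contra hd
  push_neg at hd
  have hfx : f' x = 0 := by
    have h1 : IsLocalMin f x :=
      (isMinOn_univ_iff.mpr hmin).isLocalMin univ_mem
    have h2 := h1.deriv_eq_zero
    rwa [(hf x).deriv] at h2
  have hs : Tendsto (slope f' x) (𝓝[>] x) (𝓝 d) :=
    (hasDerivAt_iff_tendsto_slope.mp hf').mono_left
      (nhdsWithin_mono x fun y hy => ne_of_gt hy)
  have hneg : ∀ᶠ y in 𝓝[>] x, slope f' x y < 0 := hs.eventually_lt_const hd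
  have hneg2 : ∀ᶠ y in 𝓝[>] x, f' y < 0 := by
    filter_upwards [hneg, self_mem_nhdsWithin] with y hy hy'
    rw [slope_def_field, hfx, sub_zero, div_lt_iff₀ (by linarith [mem_Ioi.mp hy'])] at hy
    simpa using hy
  obtain ⟨b, hb, hsub⟩ := (mem_nhdsGT_iff_exists_Ioo_subset).mp hneg2
  have hxb : x < b := mem_Ioi.mp hb
  have hanti : StrictAntiOn f (Icc x b) := by
    apply strictAntiOn_of_deriv_neg (convex_Icc x b)
    · exact fun y _ => ((hf y).differentiableAt).continuousAt.continuousWithinAt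
    · intro y hy
      rw [interior_Icc] at hy
      rw [(hf y).deriv]
      exact hsub hy
  have : f b < f x := hanti (left_mem_Icc.mpr hxb.le) (right_mem_Icc.mpr hxb.le) hxb
  exact absurd (hmin b) (not_le.mpr this)

lemma deriv_nonpos_at_right_min {f : ℝ → ℝ} {d a x : ℝ}
    (hx : HasDerivAt f d x) (hax : a < x) (hmin : ∀ y ∈ Ico a x, f x ≤ f y) : d ≤ 0 := by
  have hs : Tendsto (slope f x) (𝓝[<] x) (𝓝 d) :=
    (hasDerivAt_iff_tendsto_slope.mp hx).mono_left
      (nhdsWithin_mono x fun y hy => ne_of_lt hy)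
  have hev : ∀ᶠ y in 𝓝[<] x, slope f x y ≤ 0 := by
    filter_upwards [Ioo_mem_nhdsLT_of_mem ⟨hax, le_refl x⟩] with y hy
    rw [slope_def_field]
    apply div_nonpos_of_nonneg_of_nonpos
    · have := hmin y ⟨hy.1.le, hy.2⟩; linarith
    · linarith [hy.2]
  exact le_of_tendsto hs hev


def wf (g : ℝ → ℝ) (κ : ℝ × ℝ → ℝ) : ℝ × ℝ → ℝ := fun q => g q.1 * κ q
def Af (g : ℝ → ℝ) (κ : ℝ × ℝ → ℝ) : ℝ × ℝ → ℝ :=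
  fun p => pd1 (pd1 (wf g κ)) p + wf g κ p
def Bf (g : ℝ → ℝ) (κ : ℝ × ℝ → ℝ) : ℝ × ℝ → ℝ :=
  fun p => g p.1 * κ p ^ 2 * Af g κ p
def Gf (g : ℝ → ℝ) (κ : ℝ × ℝ → ℝ) (α : ℝ) : ℝ × ℝ → ℝ :=
  fun p => 1 + 2 * (p.2 - α) * (κ p * Af g κ p)
lemma wf_apply (g : ℝ → ℝ) (κ : ℝ × ℝ → ℝ) (x y : ℝ) : wf g κ (x, y) = g x * κ (x, y) := rfl
lemma Af_apply (g : ℝ → ℝ) (κ : ℝ × ℝ → ℝ) (x y : ℝ) :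
    Af g κ (x, y) = pd1 (pd1 (wf g κ)) (x, y) + wf g κ (x, y) := rfl
lemma Bf_apply (g : ℝ → ℝ) (κ : ℝ × ℝ → ℝ) (x y : ℝ) :
    Bf g κ (x, y) = g x * κ (x, y) ^ 2 * Af g κ (x, y) := rfl
lemma Gf_apply (g : ℝ → ℝ) (κ : ℝ × ℝ → ℝ) (α x y : ℝ) :
    Gf g κ α (x, y) = 1 + 2 * (y - α) * (κ (x, y) * Af g κ (x, y)) := rfl
lemma pd1_mk (f : ℝ × ℝ → ℝ) (x y : ℝ) : pd1 f (x, y) = deriv (fun t => f (t, y)) x := rfl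
lemma pd2_mk (f : ℝ × ℝ → ℝ) (x y : ℝ) : pd2 f (x, y) = deriv (fun t => f (x, t)) y := rfl
lemma pd1_congr {f h : ℝ × ℝ → ℝ} (x y : ℝ) (H : ∀ t, f (t, y) = h (t, y)) :
    pd1 f (x, y) = pd1 h (x, y) := by rw [pd1_mk, pd1_mk, funext H]

lemma sliceD1 {F : ℝ × ℝ → ℝ} {α T : ℝ} (hF : ContDiffOn ℝ ∞ F (univ ×ˢ Ioo α T))
    {x τ' : ℝ} (hτ' : τ' ∈ Ioo α T) : HasDerivAt (fun t => F (t, τ')) (pd1 F (x, τ')) x := by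
  have hopen : IsOpen ((univ ×ˢ Ioo α T) : Set (ℝ × ℝ)) := isOpen_univ.prod isOpen_Ioo
  have hct : ContDiffAt ℝ ∞ F (x, τ') := hF.contDiffAt (hopen.mem_nhds ⟨trivial, hτ'⟩)
  have hslice : ContDiffAt ℝ ∞ (fun t : ℝ => F (t, τ')) x :=
    hct.comp x ((contDiff_id.prodMk contDiff_const).contDiffAt)
  exact (hslice.differentiableAt hone).hasDerivAt

lemma sliceD2 {F : ℝ × ℝ → ℝ} {α T : ℝ} (hF : ContDiffOn ℝ ∞ F (univ ×ˢ Ioo α T))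
    {x τ' : ℝ} (hτ' : τ' ∈ Ioo α T) : HasDerivAt (fun t => F (x, t)) (pd2 F (x, τ')) τ' := by
  have hopen : IsOpen ((univ ×ˢ Ioo α T) : Set (ℝ × ℝ)) := isOpen_univ.prod isOpen_Ioo
  have hct : ContDiffAt ℝ ∞ F (x, τ') := hF.contDiffAt (hopen.mem_nhds ⟨trivial, hτ'⟩)
  have hslice : ContDiffAt ℝ ∞ (fun t : ℝ => F (x, t)) τ' :=
    hct.comp τ' ((contDiff_const.prodMk contDiff_id).contDiffAt)
  exact (hslice.differentiableAt hone).hasDerivAt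


section Smooth
variable {g : ℝ → ℝ} {κ : ℝ × ℝ → ℝ} {U : Set (ℝ × ℝ)}

lemma smooth_wf (hg : ContDiff ℝ ∞ g) (hκ : ContDiffOn ℝ ∞ κ U) :
    ContDiffOn ℝ ∞ (wf g κ) U :=
  ((hg.comp contDiff_fst).contDiffOn).mul hκ

lemma smooth_Af (hU : UniqueDiffOn ℝ U)
    (hline : ∀ p ∈ U, ∀ t : ℝ, ((t, p.2) : ℝ × ℝ) ∈ U)
    (hg : ContDiff ℝ ∞ g) (hκ : ContDiffOn ℝ ∞ κ U) :
    ContDiffOn ℝ ∞ (Af g κ) U :=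
  (contDiffOn_pd1 hU hline (contDiffOn_pd1 hU hline (smooth_wf hg hκ))).add
    (smooth_wf hg hκ)

lemma smooth_Bf (hU : UniqueDiffOn ℝ U)
    (hline : ∀ p ∈ U, ∀ t : ℝ, ((t, p.2) : ℝ × ℝ) ∈ U)
    (hg : ContDiff ℝ ∞ g) (hκ : ContDiffOn ℝ ∞ κ U) :
    ContDiffOn ℝ ∞ (Bf g κ) U :=
  (((hg.comp contDiff_fst).contDiffOn).mul (hκ.pow 2)).mul (smooth_Af hU hline hg hκ)

lemma smooth_Gf (α : ℝ) (hU : UniqueDiffOn ℝ U)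
    (hline : ∀ p ∈ U, ∀ t : ℝ, ((t, p.2) : ℝ × ℝ) ∈ U)
    (hg : ContDiff ℝ ∞ g) (hκ : ContDiffOn ℝ ∞ κ U) :
    ContDiffOn ℝ ∞ (Gf g κ α) U := by
  apply contDiffOn_const.add
  exact (contDiffOn_const.mul ((contDiff_snd.sub contDiff_const).contDiffOn)).mul
    (hκ.mul (smooth_Af hU hline hg hκ))
end Smooth


lemma key_identity {g : ℝ → ℝ} {κ : ℝ × ℝ → ℝ} {α T : ℝ}
    (hg : ContDiff ℝ ∞ g)
    (hκo : ContDiffOn ℝ ∞ κ (univ ×ˢ Ioo α T))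
    (hpde : ∀ θ τ, τ ∈ Ioo α T → pd2 κ (θ, τ) = κ (θ, τ) ^ 2 * Af g κ (θ, τ)) :
    ∀ θ τ, τ ∈ Ioo α T →
      pd2 (Gf g κ α) (θ, τ) * (τ - α) =
        (g θ * κ (θ, τ) ^ 2 * pd1 (pd1 (Gf g κ α)) (θ, τ)
          + 2 * κ (θ, τ) * pd1 (wf g κ) (θ, τ) * pd1 (Gf g κ α) (θ, τ)) * (τ - α)
          + Gf g κ α (θ, τ) * (Gf g κ α (θ, τ) - 1) := by
  intro θ τ hτ
  have hopen : IsOpen ((univ ×ˢ Ioo α T) : Set (ℝ × ℝ)) := isOpen_univ.prod isOpen_Ioo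
  have hUD : UniqueDiffOn ℝ ((univ ×ˢ Ioo α T) : Set (ℝ × ℝ)) := hopen.uniqueDiffOn
  have hline : ∀ p ∈ (univ ×ˢ Ioo α T : Set (ℝ × ℝ)), ∀ t : ℝ,
      ((t, p.2) : ℝ × ℝ) ∈ univ ×ˢ Ioo α T := fun p hp t => ⟨trivial, hp.2⟩
  have hw := smooth_wf (U := univ ×ˢ Ioo α T) hg hκo
  have hw1 := contDiffOn_pd1 hUD hline hw
  have hw2 := contDiffOn_pd1 hUD hline hw1
  have hA := smooth_Af hUD hline hg hκo
  have hA1 := contDiffOn_pd1 hUD hline hA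
  have hκ1 := contDiffOn_pd1 hUD hline hκo
  have hg' : ContDiff ℝ ∞ (deriv g) := (contDiff_infty_iff_deriv.mp hg).2
  have hgd : ∀ x : ℝ, HasDerivAt g (deriv g x) x := fun x =>
    ((hg.differentiable hone) x).hasDerivAt
  have hgd2 : ∀ x : ℝ, HasDerivAt (deriv g) (deriv (deriv g) x) x := fun x =>
    ((hg'.differentiable hone) x).hasDerivAt
  -- first θ-derivative of w
  have hFw : ∀ x, pd1 (wf g κ) (x, τ) = deriv g x * κ (x, τ) + g x * pd1 κ (x, τ) := by
    intro x
    exact ((hgd x).mul (sliceD1 hκo hτ (x := x))).deriv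
  -- expansion of A
  have hFA : ∀ x, Af g κ (x, τ)
      = deriv (deriv g) x * κ (x, τ) + 2 * deriv g x * pd1 κ (x, τ)
        + g x * pd1 (pd1 κ) (x, τ) + g x * κ (x, τ) := by
    intro x
    have h1 : pd1 (pd1 (wf g κ)) (x, τ)
        = deriv (fun t => deriv g t * κ (t, τ) + g t * pd1 κ (t, τ)) x := by
      rw [pd1_mk]; congr 1; funext t; exact hFw t
    have h2 := ((hgd2 x).fun_mul (sliceD1 hκo hτ (x := x))).add
      ((hgd x).fun_mul (sliceD1 hκ1 hτ (x := x)))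
    rw [Af_apply, h1, wf_apply]; erw [h2.deriv]; ring
  -- first θ-derivative of G
  have hFG1 : ∀ x, pd1 (Gf g κ α) (x, τ)
      = 2 * (τ - α) * (pd1 κ (x, τ) * Af g κ (x, τ) + κ (x, τ) * pd1 (Af g κ) (x, τ)) := by
    intro x
    have h := (((sliceD1 hκo hτ (x := x)).mul (sliceD1 hA hτ (x := x))).const_mul
      (2 * (τ - α))).const_add 1
    exact h.deriv
  -- second θ-derivative of G
  have hFG2 : pd1 (pd1 (Gf g κ α)) (θ, τ)
      = 2 * (τ - α) * ((pd1 (pd1 κ) (θ, τ) * Af g κ (θ, τ)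
          + pd1 κ (θ, τ) * pd1 (Af g κ) (θ, τ))
          + (pd1 κ (θ, τ) * pd1 (Af g κ) (θ, τ)
          + κ (θ, τ) * pd1 (pd1 (Af g κ)) (θ, τ))) := by
    have h1 : pd1 (pd1 (Gf g κ α)) (θ, τ) = deriv (fun t =>
        2 * (τ - α) * (pd1 κ (t, τ) * Af g κ (t, τ) + κ (t, τ) * pd1 (Af g κ) (t, τ))) θ := by
      rw [pd1_mk]; congr 1; funext t; exact hFG1 t
    have h2 := (((sliceD1 hκ1 hτ (x := θ)).fun_mul (sliceD1 hA hτ (x := θ))).add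
      ((sliceD1 hκo hτ (x := θ)).fun_mul (sliceD1 hA1 hτ (x := θ)))).const_mul (2 * (τ - α))
    rw [h1]; exact h2.deriv
  -- first θ-derivative of B
  have hpow : ∀ x, HasDerivAt (fun t => κ (t, τ) ^ 2) (2 * κ (x, τ) * pd1 κ (x, τ)) x := by
    intro x
    have h := (sliceD1 hκo hτ (x := x)).fun_pow 2
    refine h.congr_deriv ?_
    push_cast; ring
  have hFB1 : ∀ x, pd1 (Bf g κ) (x, τ)
      = (deriv g x * κ (x, τ) ^ 2 + g x * (2 * κ (x, τ) * pd1 κ (x, τ))) * Af g κ (x, τ)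
        + g x * κ (x, τ) ^ 2 * pd1 (Af g κ) (x, τ) := by
    intro x
    exact (((hgd x).mul (hpow x)).mul (sliceD1 hA hτ (x := x))).deriv
  -- second θ-derivative of B
  have hFB2 : pd1 (pd1 (Bf g κ)) (θ, τ)
      = deriv (deriv g) θ * κ (θ, τ) ^ 2 * Af g κ (θ, τ)
        + 4 * deriv g θ * κ (θ, τ) * pd1 κ (θ, τ) * Af g κ (θ, τ)
        + 2 * deriv g θ * κ (θ, τ) ^ 2 * pd1 (Af g κ) (θ, τ)
        + 2 * g θ * pd1 κ (θ, τ) ^ 2 * Af g κ (θ, τ)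
        + 2 * g θ * κ (θ, τ) * pd1 (pd1 κ) (θ, τ) * Af g κ (θ, τ)
        + 4 * g θ * κ (θ, τ) * pd1 κ (θ, τ) * pd1 (Af g κ) (θ, τ)
        + g θ * κ (θ, τ) ^ 2 * pd1 (pd1 (Af g κ)) (θ, τ) := by
    have h1 : pd1 (pd1 (Bf g κ)) (θ, τ) = deriv (fun t =>
        (deriv g t * κ (t, τ) ^ 2 + g t * (2 * κ (t, τ) * pd1 κ (t, τ))) * Af g κ (t, τ)
        + g t * κ (t, τ) ^ 2 * pd1 (Af g κ) (t, τ)) θ := by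
      rw [pd1_mk]; congr 1; funext t; exact hFB1 t
    have hin : HasDerivAt (fun t => 2 * κ (t, τ) * pd1 κ (t, τ))
        ((2 * pd1 κ (θ, τ)) * pd1 κ (θ, τ) + (2 * κ (θ, τ)) * pd1 (pd1 κ) (θ, τ)) θ := by
      exact ((sliceD1 hκo hτ (x := θ)).const_mul 2).mul (sliceD1 hκ1 hτ (x := θ))
    have hfirst := (((hgd2 θ).fun_mul (hpow θ)).add ((hgd θ).fun_mul hin)).fun_mul
      (sliceD1 hA hτ (x := θ))
    have hsecond := ((hgd θ).fun_mul (hpow θ)).fun_mul (sliceD1 hA1 hτ (x := θ))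
    have h := hfirst.add hsecond
    rw [h1]; erw [h.deriv]; simp only [Pi.add_apply, Pi.mul_apply]; ring
  -- time derivative of w equals B on the slice
  have hvw : ∀ x, pd2 (wf g κ) (x, τ) = Bf g κ (x, τ) := by
    intro x
    have h := (sliceD2 hκo hτ (x := x)).const_mul (g x)
    have hd : pd2 (wf g κ) (x, τ) = g x * pd2 κ (x, τ) := h.deriv
    rw [hd, hpde x τ hτ, Bf_apply]; ring
  -- time derivative of A via Clairaut
  have hA2 : pd2 (Af g κ) (θ, τ) = pd1 (pd1 (Bf g κ)) (θ, τ) + Bf g κ (θ, τ) := by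
    have hsum : pd2 (Af g κ) (θ, τ)
        = pd2 (pd1 (pd1 (wf g κ))) (θ, τ) + pd2 (wf g κ) (θ, τ) :=
      ((sliceD2 hw2 hτ (x := θ)).add (sliceD2 hw hτ (x := θ))).deriv
    rw [hsum, pd_comm hopen hw1 (show ((θ, τ) : ℝ × ℝ) ∈ univ ×ˢ Ioo α T from ⟨trivial, hτ⟩)]
    have hx : ∀ x, pd2 (pd1 (wf g κ)) (x, τ) = pd1 (Bf g κ) (x, τ) := by
      intro x
      rw [pd_comm hopen hw (show ((x, τ) : ℝ × ℝ) ∈ univ ×ˢ Ioo α T from ⟨trivial, hτ⟩)]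
      exact pd1_congr x τ fun t => hvw t
    rw [pd1_congr θ τ hx, hvw θ]
  -- time derivative of G
  have hGτ : pd2 (Gf g κ α) (θ, τ)
      = 2 * (κ (θ, τ) * Af g κ (θ, τ))
        + 2 * (τ - α) * (pd2 κ (θ, τ) * Af g κ (θ, τ) + κ (θ, τ) * pd2 (Af g κ) (θ, τ)) := by
    have h1 : HasDerivAt (fun t : ℝ => 2 * (t - α)) 2 τ := by
      simpa using ((hasDerivAt_id τ).sub_const α).const_mul 2
    have h2 := (sliceD2 hκo hτ (x := θ)).mul (sliceD2 hA hτ (x := θ))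
    have h := (h1.mul h2).const_add 1
    exact h.deriv
  -- final assembly
  rw [hGτ, hpde θ τ hτ, hA2, hFG2, hFB2, hFw θ, Gf_apply, hFG1 θ, Bf_apply]
  linear_combination (-(2:ℝ) * (τ - α)^2 * κ (θ, τ)^2 * Af g κ (θ, τ)) * (hFA θ)


lemma G_nonneg {g : ℝ → ℝ} {κ : ℝ × ℝ → ℝ} {α T : ℝ} (hαT : α < T)
    (hg : ContDiff ℝ ∞ g) (hgpos : ∀ x, 0 < g x) (hgper : Function.Periodic g (2 * π))
    (hκ : ContDiffOn ℝ ∞ κ (univ ×ˢ Ico α T))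
    (hκper : ∀ θ : ℝ, ∀ τ ∈ Ico α T, κ (θ + 2 * π, τ) = κ (θ, τ))
    (hpde : ∀ θ τ, τ ∈ Ioo α T → pd2 κ (θ, τ) = κ (θ, τ) ^ 2 * Af g κ (θ, τ)) :
    ∀ θ τ, τ ∈ Ioo α T → 0 ≤ Gf g κ α (θ, τ) := by
  have hπ : 0 < 2 * π := by positivity
  by_contra hcon
  push_neg at hcon
  obtain ⟨θs, τ₁, hτ₁, hneg⟩ := hcon
  -- basic sets
  have hsub : (univ ×ˢ Ioo α T : Set (ℝ × ℝ)) ⊆ univ ×ˢ Ico α T :=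
    prod_mono_right Ioo_subset_Ico_self
  have hopen : IsOpen ((univ ×ˢ Ioo α T) : Set (ℝ × ℝ)) := isOpen_univ.prod isOpen_Ioo
  have hUDc : UniqueDiffOn ℝ ((univ ×ˢ Ico α T) : Set (ℝ × ℝ)) :=
    uniqueDiffOn_univ.prod (uniqueDiffOn_Ico α T)
  have hlinec : ∀ p ∈ (univ ×ˢ Ico α T : Set (ℝ × ℝ)), ∀ t : ℝ,
      ((t, p.2) : ℝ × ℝ) ∈ univ ×ˢ Ico α T := fun p hp t => ⟨trivial, hp.2⟩
  have hκo : ContDiffOn ℝ ∞ κ (univ ×ˢ Ioo α T) := hκ.mono hsub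
  have hGc : ContDiffOn ℝ ∞ (Gf g κ α) (univ ×ˢ Ico α T) := smooth_Gf α hUDc hlinec hg hκ
  have hGo : ContDiffOn ℝ ∞ (Gf g κ α) (univ ×ˢ Ioo α T) := hGc.mono hsub
  have hG1o : ContDiffOn ℝ ∞ (pd1 (Gf g κ α)) (univ ×ˢ Ioo α T) :=
    contDiffOn_pd1 hopen.uniqueDiffOn (fun p hp t => ⟨trivial, hp.2⟩) hGo
  have hAc : ContDiffOn ℝ ∞ (Af g κ) (univ ×ˢ Ico α T) := smooth_Af hUDc hlinec hg hκ
  -- periodicity of A and G in θ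
  have hAper : ∀ τ' ∈ Ico α T, ∀ x, Af g κ (x + 2 * π, τ') = Af g κ (x, τ') := by
    intro τ' hτ' x
    have hWper : Function.Periodic (fun t => wf g κ (t, τ')) (2 * π) := by
      intro t
      simp only [wf_apply]
      rw [hκper t τ' hτ', hgper t]
    have h2 : Function.Periodic (deriv (deriv (fun t => wf g κ (t, τ')))) (2 * π) :=
      periodic_deriv' (periodic_deriv' hWper)
    have e1 : ∀ y : ℝ, pd1 (pd1 (wf g κ)) (y, τ')
        = deriv (deriv (fun t => wf g κ (t, τ'))) y := fun y => rfl
    rw [Af_apply, Af_apply, e1, e1, h2 x]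
    have := hWper x
    simp only at this
    rw [this]
  have hGper : ∀ τ' ∈ Ico α T, Function.Periodic (fun x => Gf g κ α (x, τ')) (2 * π) := by
    intro τ' hτ' x
    simp only [Gf_apply]
    rw [hκper x τ' hτ', hAper τ' hτ' x]
  -- bound on Q = κ * A near the initial time
  set Q : ℝ × ℝ → ℝ := fun p => κ p * Af g κ p with hQdef
  have hτ₁Ico : τ₁ ∈ Ico α T := ⟨hτ₁.1.le, hτ₁.2⟩
  have hKsub : (Icc 0 (2 * π) ×ˢ Icc α τ₁ : Set (ℝ × ℝ)) ⊆ univ ×ˢ Ico α T := by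
    intro p hp
    exact ⟨trivial, hp.2.1, lt_of_le_of_lt hp.2.2 hτ₁.2⟩
  have hQcont : ContinuousOn Q (univ ×ˢ Ico α T) :=
    (hκ.continuousOn).mul (hAc.continuousOn)
  obtain ⟨M, hM⟩ := (isCompact_Icc.prod isCompact_Icc).exists_bound_of_continuousOn
    (hQcont.mono hKsub)
  have hQb : ∀ x : ℝ, ∀ τ' ∈ Icc α τ₁, |Q (x, τ')| ≤ |M| := by
    intro x τ' hτ'
    have hτ'Ico : τ' ∈ Ico α T := ⟨hτ'.1, lt_of_le_of_lt hτ'.2 hτ₁.2⟩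
    have hqper : Function.Periodic (fun t => Q (t, τ')) (2 * π) := by
      intro t
      simp only [hQdef]
      rw [hκper t τ' hτ'Ico, hAper τ' hτ'Ico t]
    obtain ⟨y, hy, hxy⟩ := hqper.exists_mem_Ico₀ hπ x
    rw [hxy]
    calc |Q (y, τ')| = ‖Q (y, τ')‖ := (Real.norm_eq_abs _).symm
      _ ≤ M := hM (y, τ') ⟨⟨hy.1, hy.2.le⟩, hτ'⟩
      _ ≤ |M| := le_abs_self M
  -- choose the initial time α'
  set δ : ℝ := min ((τ₁ - α) / 2) (1 / (4 * (|M| + 1))) with hδdef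
  have hδpos : 0 < δ := by
    apply lt_min
    · linarith [hτ₁.1]
    · positivity
  have hδ1 : δ ≤ (τ₁ - α) / 2 := min_le_left _ _
  have hδ2 : δ ≤ 1 / (4 * (|M| + 1)) := min_le_right _ _
  set α' : ℝ := α + δ with hα'def
  have hαα' : α < α' := by simp [hα'def, hδpos]
  have hα'τ₁ : α' < τ₁ := by
    have : δ < τ₁ - α := lt_of_le_of_lt hδ1 (by linarith [hτ₁.1])
    simp only [hα'def]; linarith
  have hα'Ico : α' ∈ Ico α T := ⟨hαα'.le, lt_trans hα'τ₁ hτ₁.2⟩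
  have hG0 : ∀ x, (1 : ℝ) / 2 ≤ Gf g κ α (x, α') := by
    intro x
    have hb := hQb x α' ⟨hαα'.le, hα'τ₁.le⟩
    have habs : |2 * δ * Q (x, α')| ≤ 1 / 2 := by
      rw [abs_mul]
      have h1 : |2 * δ| = 2 * δ := abs_of_pos (by linarith)
      rw [h1]
      have h2 : 2 * δ * |Q (x, α')| ≤ 2 * (1 / (4 * (|M| + 1))) * (|M| + 1) := by
        apply mul_le_mul
        · linarith
        · linarith [le_abs_self M, abs_nonneg M, hb]
        · exact abs_nonneg _
        · positivity
      have h3 : 2 * (1 / (4 * (|M| + 1))) * (|M| + 1) = 1 / 2 := by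
        field_simp
        ring
      linarith
    have := neg_abs_le (2 * δ * Q (x, α'))
    rw [Gf_apply]
    have hαα : α' - α = δ := by simp [hα'def]
    rw [hαα]
    have : -(1 / 2 : ℝ) ≤ 2 * δ * Q (x, α') := by
      have := neg_abs_le (2 * δ * Q (x, α'))
      linarith
    simp only [hQdef] at this
    linarith
  -- the touching set
  set ε : ℝ := -(Gf g κ α (θs, τ₁)) / 2 with hεdef
  have hεpos : 0 < ε := by simp only [hεdef]; linarith
  have hGτ₁ : Gf g κ α (θs, τ₁) = -2 * ε := by simp only [hεdef]; ring
  set K' : Set (ℝ × ℝ) := Icc 0 (2 * π) ×ˢ Icc α' τ₁ with hK'def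
  have hK'sub : K' ⊆ univ ×ˢ Ico α T := by
    intro p hp
    exact ⟨trivial, le_trans hαα'.le hp.2.1, lt_of_le_of_lt hp.2.2 hτ₁.2⟩
  set C : Set (ℝ × ℝ) := K' ∩ (Gf g κ α) ⁻¹' (Iic (-ε)) with hCdef
  have hCcompact : IsCompact C := by
    apply (isCompact_Icc.prod isCompact_Icc).of_isClosed_subset
    · exact (hGc.continuousOn.mono hK'sub).preimage_isClosed_of_isClosed
        (isClosed_Icc.prod isClosed_Icc) isClosed_Iic
    · exact inter_subset_left
  have hCne : C.Nonempty := by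
    obtain ⟨y, hy, hxy⟩ := (hGper τ₁ hτ₁Ico).exists_mem_Ico₀ hπ θs
    refine ⟨(y, τ₁), ⟨⟨⟨hy.1, hy.2.le⟩, ⟨hα'τ₁.le, le_refl _⟩⟩, ?_⟩⟩
    simp only [mem_preimage, mem_Iic]
    have : Gf g κ α (y, τ₁) = -2 * ε := by rw [← hxy]; exact hGτ₁
    rw [this]; linarith
  set S : Set ℝ := Prod.snd '' C with hSdef
  have hScompact : IsCompact S := hCcompact.image continuous_snd
  have hSne : S.Nonempty := hCne.image _
  set τ₀ : ℝ := sInf S with hτ₀def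
  have hτ₀S : τ₀ ∈ S := hScompact.sInf_mem hSne
  obtain ⟨p₀, hp₀C, hp₀2⟩ := hτ₀S
  set θ₀ : ℝ := p₀.1 with hθ₀def
  have hp₀ : p₀ = (θ₀, τ₀) := by rw [hθ₀def, ← hp₀2]
  rw [hp₀] at hp₀C
  have hGp₀ : Gf g κ α (θ₀, τ₀) ≤ -ε := hp₀C.2
  have hτ₀mem : τ₀ ∈ Icc α' τ₁ := hp₀C.1.2
  have hα'τ₀ : α' < τ₀ := by
    rcases lt_or_eq_of_le hτ₀mem.1 with h | h
    · exact h
    · exfalso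
      have := hG0 θ₀
      rw [← h] at hGp₀
      linarith
  have hτ₀Ioo : τ₀ ∈ Ioo α T :=
    ⟨lt_trans hαα' hα'τ₀, lt_of_le_of_lt hτ₀mem.2 hτ₁.2⟩
  -- no touching before τ₀
  have hlower : ∀ x, ∀ t ∈ Ico α' τ₀, -ε < Gf g κ α (x, t) := by
    intro x t ht
    by_contra hle
    push_neg at hle
    have htIco : t ∈ Ico α T :=
      ⟨le_trans hαα'.le ht.1, lt_of_le_of_lt (le_trans ht.2.le hτ₀mem.2) hτ₁.2⟩
    obtain ⟨y, hy, hxy⟩ := (hGper t htIco).exists_mem_Ico₀ hπ x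
    have hyC : (y, t) ∈ C := by
      refine ⟨⟨⟨hy.1, hy.2.le⟩, ⟨ht.1, le_trans ht.2.le hτ₀mem.2⟩⟩, ?_⟩
      simp only [mem_preimage, mem_Iic]
      rw [← hxy]; exact hle
    have : τ₀ ≤ t := csInf_le hScompact.bddBelow ⟨(y, t), hyC, rfl⟩
    linarith [ht.2]
  -- spatial minimum at θ₀
  have hθmin : ∀ x, Gf g κ α (θ₀, τ₀) ≤ Gf g κ α (x, τ₀) := by
    intro x
    by_contra hlt
    push_neg at hlt
    have hxlt : Gf g κ α (x, τ₀) < -ε := lt_of_lt_of_le hlt hGp₀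
    have hcont : ContinuousAt (fun t => Gf g κ α (x, t)) τ₀ :=
      (sliceD2 hGo hτ₀Ioo (x := x)).continuousAt
    have hev : ∀ᶠ t in 𝓝[<] τ₀, Gf g κ α (x, t) < -ε :=
      (hcont.eventually_mem (Iio_mem_nhds hxlt)).filter_mono nhdsWithin_le_nhds
    have hev2 : ∀ᶠ t in 𝓝[<] τ₀, t ∈ Ioo α' τ₀ :=
      eventually_of_mem (Ioo_mem_nhdsLT_of_mem ⟨hα'τ₀, le_refl _⟩) (fun t ht => ht)
    obtain ⟨t, ht1, ht2⟩ := (hev.and hev2).exists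
    exact absurd ht1 (not_lt.mpr (hlower x t ⟨ht2.1.le, ht2.2⟩).le)
  have hGval : Gf g κ α (θ₀, τ₀) = -ε := by
    apply le_antisymm hGp₀
    by_contra hlt
    push_neg at hlt
    -- Gf (θ₀,τ₀) < -ε : contradiction with hθmin? no--use hlower-type argument at θ₀ itself
    have hcont : ContinuousAt (fun t => Gf g κ α (θ₀, t)) τ₀ :=
      (sliceD2 hGo hτ₀Ioo (x := θ₀)).continuousAt
    have hev : ∀ᶠ t in 𝓝[<] τ₀, Gf g κ α (θ₀, t) < -ε :=
      (hcont.eventually_mem (Iio_mem_nhds hlt)).filter_mono nhdsWithin_le_nhds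
    have hev2 : ∀ᶠ t in 𝓝[<] τ₀, t ∈ Ioo α' τ₀ :=
      eventually_of_mem (Ioo_mem_nhdsLT_of_mem ⟨hα'τ₀, le_refl _⟩) (fun t ht => ht)
    obtain ⟨t, ht1, ht2⟩ := (hev.and hev2).exists
    exact absurd ht1 (not_lt.mpr (hlower θ₀ t ⟨ht2.1.le, ht2.2⟩).le)
  -- first and second spatial derivatives at the minimum
  have h1 : pd1 (Gf g κ α) (θ₀, τ₀) = 0 := by
    have hloc : IsLocalMin (fun x => Gf g κ α (x, τ₀)) θ₀ :=
      (isMinOn_univ_iff.mpr hθmin).isLocalMin univ_mem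
    have := hloc.deriv_eq_zero
    rwa [(sliceD1 hGo hτ₀Ioo (x := θ₀)).deriv] at this
  have h2 : 0 ≤ pd1 (pd1 (Gf g κ α)) (θ₀, τ₀) := by
    apply second_deriv_nonneg_at_min (f := fun x => Gf g κ α (x, τ₀))
      (f' := fun x => pd1 (Gf g κ α) (x, τ₀))
    · exact fun y => sliceD1 hGo hτ₀Ioo (x := y)
    · exact sliceD1 hG1o hτ₀Ioo (x := θ₀)
    · exact hθmin
  have h3 : pd2 (Gf g κ α) (θ₀, τ₀) ≤ 0 := by
    apply deriv_nonpos_at_right_min (f := fun t => Gf g κ α (θ₀, t)) (a := α')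
    · exact sliceD2 hGo hτ₀Ioo (x := θ₀)
    · exact hα'τ₀
    · intro y hy
      rw [hGval]
      exact (hlower θ₀ y hy).le
  -- contradiction with the key identity
  have hid := key_identity hg hκo hpde θ₀ τ₀ hτ₀Ioo
  rw [hGval, h1] at hid
  have hτ₀α : 0 < τ₀ - α := by linarith [hτ₀Ioo.1]
  have hterm : 0 ≤ g θ₀ * κ (θ₀, τ₀) ^ 2 * pd1 (pd1 (Gf g κ α)) (θ₀, τ₀) :=
    mul_nonneg (mul_nonneg (hgpos θ₀).le (sq_nonneg _)) h2
  nlinarith [hid, hεpos, hτ₀α, hterm, h3]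


/-- **Harnack-type monotonicity.** If `κ > 0` is smooth, `2π`-periodic in `θ`,
and satisfies `∂_τ κ = κ² (∂²_θ(gκ) + gκ)` on `[α, T)`, then for each fixed `θ` the
function `τ ↦ κ(θ, τ)·√(τ − α)` is nondecreasing on `(α, T)`. -/
theorem acsf_harnack_monotonicity
    (g : ℝ → ℝ) (hg : ContDiff ℝ (⊤ : ℕ∞) g) (hgpos : ∀ x, 0 < g x)
    (hgper : Function.Periodic g (2 * π))
    (α T : ℝ) (hαT : α < T)
    (κ : ℝ × ℝ → ℝ)
    (hκ : ContDiffOn ℝ (⊤ : ℕ∞) κ (univ ×ˢ Ico α T))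
    (hκpos : ∀ θ : ℝ, ∀ τ ∈ Ico α T, 0 < κ (θ, τ))
    (hκper : ∀ θ : ℝ, ∀ τ ∈ Ico α T, κ (θ + 2 * π, τ) = κ (θ, τ))
    (hpde : ∀ θ : ℝ, ∀ τ ∈ Ioo α T,
      pd2 κ (θ, τ) =
        (κ (θ, τ)) ^ 2 * (pd1 (pd1 fun q => g q.1 * κ q) (θ, τ) + g θ * κ (θ, τ))) :
    ∀ θ : ℝ, MonotoneOn (fun τ => κ (θ, τ) * Real.sqrt (τ - α)) (Ioo α T) := by
  intro θ
  have hg' : ContDiff ℝ ∞ g := hg.of_le (by simp)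
  have hκ' : ContDiffOn ℝ ∞ κ (univ ×ˢ Ico α T) := hκ.of_le (by simp)
  have hsub : (univ ×ˢ Ioo α T : Set (ℝ × ℝ)) ⊆ univ ×ˢ Ico α T :=
    prod_mono_right Ioo_subset_Ico_self
  have hκo : ContDiffOn ℝ ∞ κ (univ ×ˢ Ioo α T) := hκ'.mono hsub
  have hpdeA : ∀ θ' τ, τ ∈ Ioo α T → pd2 κ (θ', τ) = κ (θ', τ) ^ 2 * Af g κ (θ', τ) :=
    fun θ' τ h => hpde θ' τ h
  have hGnn := G_nonneg hαT hg' hgpos hgper hκ' hκper hpdeA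
  -- derivative of the product
  have hφ : ∀ τ ∈ Ioo α T, HasDerivAt (fun t => κ (θ, t) * Real.sqrt (t - α))
      (pd2 κ (θ, τ) * Real.sqrt (τ - α) + κ (θ, τ) * (1 / (2 * Real.sqrt (τ - α)) * 1)) τ := by
    intro τ hτ
    have hne : τ - α ≠ 0 := ne_of_gt (by linarith [hτ.1])
    have hsq : HasDerivAt (fun t => Real.sqrt (t - α)) (1 / (2 * Real.sqrt (τ - α)) * 1) τ :=
      (Real.hasDerivAt_sqrt hne).comp τ ((hasDerivAt_id τ).sub_const α)
    exact (sliceD2 hκo hτ (x := θ)).mul hsq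
  apply monotoneOn_of_deriv_nonneg (convex_Ioo α T)
  · -- continuity
    apply ContinuousOn.mul
    · intro τ hτ
      exact ((sliceD2 hκo hτ (x := θ)).continuousAt).continuousWithinAt
    · exact (Real.continuous_sqrt.comp (continuous_id.sub continuous_const)).continuousOn
  · -- differentiability on the interior
    intro τ hτ
    rw [interior_Ioo] at hτ
    exact ((hφ τ hτ).differentiableAt).differentiableWithinAt
  · -- nonnegativity of the derivative
    intro τ hτ
    rw [interior_Ioo] at hτ
    rw [(hφ τ hτ).deriv, hpdeA θ τ hτ]
    have hταpos : 0 < τ - α := by linarith [hτ.1]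
    have hstpos : 0 < Real.sqrt (τ - α) := Real.sqrt_pos.mpr hταpos
    have hss : Real.sqrt (τ - α) * Real.sqrt (τ - α) = τ - α :=
      Real.mul_self_sqrt hταpos.le
    have hupos : 0 < κ (θ, τ) := hκpos θ τ ⟨hτ.1.le, hτ.2⟩
    have hGτ : 0 ≤ 1 + 2 * (τ - α) * (κ (θ, τ) * Af g κ (θ, τ)) := by
      have := hGnn θ τ hτ
      rwa [Gf_apply] at this
    have hval : κ (θ, τ) ^ 2 * Af g κ (θ, τ) * Real.sqrt (τ - α)
        + κ (θ, τ) * (1 / (2 * Real.sqrt (τ - α)) * 1)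
        = (κ (θ, τ) * (1 + 2 * (τ - α) * (κ (θ, τ) * Af g κ (θ, τ))))
          / (2 * Real.sqrt (τ - α)) := by
      field_simp
      linear_combination (2 * κ (θ, τ) * Af g κ (θ, τ)) * hss
    rw [hval]
    exact div_nonneg (mul_nonneg hupos.le hGτ) (by positivity)
end
end
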